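/- Let m, a : ℝ → ℝ³ be differentiable and satisfy ṁ = p × a, ȧ = m × a with p constant. Then the Lax matrix L(λ) = P + M/λ + A/λ² (su(2) matrices of p, m, a) satisfies, for all λ ≠ 0, the Lax equation d/dt L(λ) = [L(λ), A/λ] = -[L(λ), λP + M]. -/

import Mathlib

open Matrix

/-- The standard identification of `ℝ³` with `su(2)`. -/
noncomputable def su2 (a : Fin 3 → ℝ) : Matrix (Fin 2) (Fin 2) ℂ :=
  (1 / 2 : ℂ) • !![-Complex.I * a 2, -Complex.I * a 0 - a 1;
                   -Complex.I * a 0 + a 1, Complex.I * a 2]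

/-- The Lagrange top Lax matrix `L(λ) = P + M/λ + A/λ²`. -/
noncomputable def lagrangeLax (p m a : Fin 3 → ℝ) (l : ℝ) :
    Matrix (Fin 2) (Fin 2) ℂ :=
  su2 p + ((l : ℂ))⁻¹ • su2 m + (((l : ℂ)) ^ 2)⁻¹ • su2 a

/-- `su2` intertwines the cross product and the matrix commutator. -/
lemma su2_cross (x y : Fin 3 → ℝ) :
    su2 (x ⨯₃ y) = su2 x * su2 y - su2 y * su2 x := by
  ext i j
  fin_cases i <;> fin_cases j <;>
    simp [su2, crossProduct, Matrix.mul_apply, Fin.sum_univ_two, Complex.ext_iff] <;>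
    ring_nf <;> simp [Complex.I_sq]

/-- Entrywise derivative of `su2` along a differentiable curve. -/
lemma su2_deriv (v : ℝ → Fin 3 → ℝ) (v' : Fin 3 → ℝ) (t : ℝ)
    (h : HasDerivAt v v' t) (j k : Fin 2) :
    HasDerivAt (fun t => su2 (v t) j k) (su2 v' j k) t := by
  have h0 := (hasDerivAt_pi.mp h 0).ofReal_comp
  have h1 := (hasDerivAt_pi.mp h 1).ofReal_comp
  have h2 := (hasDerivAt_pi.mp h 2).ofReal_comp
  fin_cases j <;> fin_cases k <;> simp only [Fin.zero_eta, Fin.mk_one, Fin.isValue]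
  · have e : ∀ w : Fin 3 → ℝ, su2 w 0 0 = (-Complex.I/2) * (w 2) := by
      intro w; simp [su2]; ring
    simp_rw [e]; exact h2.const_mul _
  · have e : ∀ w : Fin 3 → ℝ, su2 w 0 1 = (-Complex.I/2) * (w 0) - (1/2) * (w 1) := by
      intro w; simp [su2]; ring
    simp_rw [e]; exact (h0.const_mul _).sub (h1.const_mul _)
  · have e : ∀ w : Fin 3 → ℝ, su2 w 1 0 = (-Complex.I/2) * (w 0) + (1/2) * (w 1) := by
      intro w; simp [su2]; ring
    simp_rw [e]; exact (h0.const_mul _).add (h1.const_mul _)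
  · have e : ∀ w : Fin 3 → ℝ, su2 w 1 1 = (Complex.I/2) * (w 2) := by
      intro w; simp [su2]; ring
    simp_rw [e]; exact h2.const_mul _

lemma lax_aux1 (P M A : Matrix (Fin 2) (Fin 2) ℂ) (c : ℂ) :
    (P + c•M + c^2•A) * (c•A) - (c•A) * (P + c•M + c^2•A)
      = c•(P*A-A*P) + c^2•(M*A-A*M) := by
  simp only [add_mul, mul_add, Matrix.smul_mul, Matrix.mul_smul, smul_smul, smul_sub]
  module

lemma lax_aux2 (P M A : Matrix (Fin 2) (Fin 2) ℂ) (lC c : ℂ) (h : lC * c = 1) :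
    c•(P*A-A*P) + c^2•(M*A-A*M)
      = -((P + c•M + c^2•A) * (lC•P + M) - (lC•P + M)*(P + c•M + c^2•A)) := by
  have hc : c ≠ 0 := right_ne_zero_of_mul_eq_one h
  have hlC : lC = c⁻¹ := eq_inv_of_mul_eq_one_left h
  subst hlC
  simp only [add_mul, mul_add, Matrix.smul_mul, Matrix.mul_smul, smul_smul, smul_sub]
  match_scalars <;> field_simp <;> ring

/-- Solutions of the Lagrange top equations `ṁ = p × a`, `ȧ = m × a` satisfy
the Lax equation `dL(λ)/dt = [L(λ), A/λ] = -[L(λ), λP + M]` (entrywise). -/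
theorem lagrange_lax_equation (p : Fin 3 → ℝ) (m a : ℝ → Fin 3 → ℝ)
    (hm : ∀ t, HasDerivAt m (p ⨯₃ a t) t)
    (ha : ∀ t, HasDerivAt a (m t ⨯₃ a t) t)
    (l : ℝ) (hl : l ≠ 0) (t : ℝ) (j k : Fin 2) :
    HasDerivAt (fun t => lagrangeLax p (m t) (a t) l j k)
      ((lagrangeLax p (m t) (a t) l * (((l : ℂ))⁻¹ • su2 (a t)) -
        (((l : ℂ))⁻¹ • su2 (a t)) * lagrangeLax p (m t) (a t) l) j k) t ∧
    (lagrangeLax p (m t) (a t) l * (((l : ℂ))⁻¹ • su2 (a t)) -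
        (((l : ℂ))⁻¹ • su2 (a t)) * lagrangeLax p (m t) (a t) l) =
      -(lagrangeLax p (m t) (a t) l * ((l : ℂ) • su2 p + su2 (m t)) -
        ((l : ℂ) • su2 p + su2 (m t)) * lagrangeLax p (m t) (a t) l) := by
  have hC : ((l : ℂ)) ≠ 0 := Complex.ofReal_ne_zero.mpr hl
  set c : ℂ := ((l : ℂ))⁻¹ with hc
  have hLax : ∀ s, lagrangeLax p (m s) (a s) l = su2 p + c • su2 (m s) + c^2 • su2 (a s) := by
    intro s; rw [lagrangeLax, hc, inv_pow]
  have key : lagrangeLax p (m t) (a t) l * (c • su2 (a t)) -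
      (c • su2 (a t)) * lagrangeLax p (m t) (a t) l
      = c • su2 (p ⨯₃ a t) + c^2 • su2 (m t ⨯₃ a t) := by
    rw [hLax, su2_cross, su2_cross]
    exact lax_aux1 _ _ _ _
  refine ⟨?_, ?_⟩
  · rw [key]
    have hd : HasDerivAt
        (fun s => su2 p j k + c * su2 (m s) j k + c^2 * su2 (a s) j k)
        (0 + c * su2 (p ⨯₃ a t) j k + c^2 * su2 (m t ⨯₃ a t) j k) t :=
      ((hasDerivAt_const t _).add ((su2_deriv m _ t (hm t) j k).const_mul c)).add
        ((su2_deriv a _ t (ha t) j k).const_mul (c^2))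
    have hfun : (fun s => lagrangeLax p (m s) (a s) l j k)
        = fun s => su2 p j k + c * su2 (m s) j k + c^2 * su2 (a s) j k := by
      funext s; rw [hLax]
      simp [Matrix.add_apply, Matrix.smul_apply, smul_eq_mul]
    rw [hfun]
    convert hd using 1
    simp [Matrix.add_apply, Matrix.smul_apply, smul_eq_mul]
  · rw [key, hLax, su2_cross, su2_cross]
    exact lax_aux2 _ _ _ _ _ (mul_inv_cancel₀ hC)
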